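/- arXiv:0902.4481 — 2 statements merged into one kernel-verified Lean document; each statement's English description precedes it below -/
import Mathlib

section
/- Let L be a nonnegative random variable with an asymptotically exponential tail with decay rate μ > 0, let M ≥ 2 be an integer, ν > 0, and 0 < ζ < 1. Define the random variable N̂ on the nonnegative integers by P[N̂ > n] = min{ 1, E[(1 − (1/M) e^{−L(M−1)ν})^{⌊n/2⌋}] + 2 ζ^{√(n/2)} }. Then lim_{n→∞} (log P[N̂ > n]) / (log n) = −μ / ((M−1)ν). -/
open MeasureTheory Filter



set_option maxHeartbeats 1000000 in
private lemma lem_sandwich (S : ℕ → ℝ) (A : ℝ) (hA : 0 < A)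
    (h : ∀ δ : ℝ, 0 < δ → δ ≤ A/2 →
      ∀ᶠ n : ℕ in atTop,
        Real.exp (-(A+δ) * Real.log n) ≤ S n ∧ S n ≤ Real.exp (-(A-δ) * Real.log n)) :
    Tendsto (fun n : ℕ => Real.log (min 1 (S n)) / Real.log n) atTop (nhds (-A)) := by
  rw [Metric.tendsto_nhds]
  intro ε hε
  set δ : ℝ := min (ε/2) (A/2) with hδ_def
  have hδ0 : 0 < δ := lt_min (by linarith) (by linarith)
  have hδε : δ ≤ ε/2 := min_le_left _ _
  have hδA : δ ≤ A/2 := min_le_right _ _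
  filter_upwards [h δ hδ0 hδA, eventually_gt_atTop 1] with n hn hn1
  obtain ⟨hl, hu⟩ := hn
  have hn1' : (1:ℝ) < n := by exact_mod_cast hn1
  have hlogpos : 0 < Real.log n := Real.log_pos hn1'
  have hS1 : S n ≤ 1 := by
    refine hu.trans ?_
    apply Real.exp_le_one_iff.mpr
    nlinarith
  have hSpos : 0 < S n := lt_of_lt_of_le (Real.exp_pos _) hl
  rw [min_eq_right hS1]
  have hlog_up : Real.log (S n) ≤ -(A - δ) * Real.log n := by
    calc Real.log (S n) ≤ Real.log (Real.exp (-(A - δ) * Real.log n)) :=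
          Real.log_le_log hSpos hu
      _ = -(A - δ) * Real.log n := Real.log_exp _
  have hlog_lo : -(A + δ) * Real.log n ≤ Real.log (S n) := by
    calc -(A + δ) * Real.log n
        = Real.log (Real.exp (-(A + δ) * Real.log n)) := (Real.log_exp _).symm
      _ ≤ Real.log (S n) := Real.log_le_log (Real.exp_pos _) hl
  have hdiv_up : Real.log (S n) / Real.log n ≤ -(A - δ) := (div_le_iff₀ hlogpos).mpr hlog_up
  have hdiv_lo : -(A + δ) ≤ Real.log (S n) / Real.log n := (le_div_iff₀ hlogpos).mpr hlog_lo
  rw [Real.dist_eq]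
  have habs : |Real.log (S n) / Real.log n - (-A)| ≤ δ := abs_le.mpr ⟨by linarith, by linarith⟩
  linarith

set_option maxHeartbeats 1000000 in
private lemma lem_tail (g : ℝ → ℝ) (hg : ∀ x, 0 ≤ g x) (μ ε₁ : ℝ) (hε₁ : 0 < ε₁)
    (hε₁μ : ε₁ < μ) (h : Tendsto (fun x => Real.log (g x) / x) atTop (nhds (-μ))) :
    ∀ᶠ x : ℝ in atTop, Real.exp ((-μ-ε₁)*x) ≤ g x ∧ g x ≤ Real.exp ((-μ+ε₁)*x) := by
  have h1 := h (Ioo_mem_nhds (show -μ - ε₁ < -μ by linarith) (show -μ < -μ + ε₁ by linarith))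
  rw [mem_map] at h1
  filter_upwards [h1, eventually_gt_atTop 0] with x hx hx0
  simp only [Set.mem_preimage, Set.mem_Ioo] at hx
  have hup' : Real.log (g x) < (-μ + ε₁) * x := (div_lt_iff₀ hx0).mp hx.2
  have hlo' : (-μ - ε₁) * x < Real.log (g x) := (lt_div_iff₀ hx0).mp hx.1
  have hppos : 0 < g x := by
    by_contra hcon
    push_neg at hcon
    have hp0 : g x = 0 := le_antisymm hcon (hg x)
    rw [hp0, Real.log_zero] at hup'
    nlinarith
  constructor
  · calc Real.exp ((-μ-ε₁)*x) ≤ Real.exp (Real.log (g x)) := Real.exp_le_exp.mpr hlo'.le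
      _ = g x := Real.exp_log hppos
  · calc g x = Real.exp (Real.log (g x)) := (Real.exp_log hppos).symm
      _ ≤ Real.exp ((-μ+ε₁)*x) := Real.exp_le_exp.mpr hup'.le

set_option maxHeartbeats 1000000 in
private lemma lem_geom (M : ℕ) (hM : 2 ≤ M) (B β : ℝ) (hB : 0 < B) (hβ0 : 0 < β)
    (hβ1 : β < 1) :
    ∀ᶠ n : ℕ in atTop,
      (1 - (1/(M:ℝ)) * Real.exp (-(β * Real.log n)))^(n/2)
        ≤ Real.exp (-B * Real.log n) := by
  have hM2 : (2:ℝ) ≤ (M:ℝ) := by exact_mod_cast hM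
  have hMpos : (0:ℝ) < M := by linarith
  set D : ℝ := 4 * M * B with hD_def
  have hD : 0 < D := by rw [hD_def]; positivity
  have hr : (0:ℝ) < 1 - β := by linarith
  have hO := (isLittleO_log_rpow_atTop hr).def (show (0:ℝ) < 1/D by positivity)
  have Hx : ∀ᶠ x : ℝ in atTop, D * Real.log x ≤ Real.exp (Real.log x * (1 - β)) := by
    filter_upwards [hO, eventually_ge_atTop (1:ℝ)] with x hx hx1
    have hx0 : (0:ℝ) < x := by linarith
    have hlognn : 0 ≤ Real.log x := Real.log_nonneg hx1
    rw [Real.norm_eq_abs, Real.norm_eq_abs, abs_of_nonneg hlognn,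
      abs_of_nonneg (Real.rpow_nonneg hx0.le _)] at hx
    have h3 : D * Real.log x ≤ x ^ (1 - β) := by
      rw [div_mul_eq_mul_div, le_div_iff₀ hD] at hx
      linarith
    calc D * Real.log x ≤ x ^ (1-β) := h3
      _ = Real.exp (Real.log x * (1 - β)) := Real.rpow_def_of_pos hx0 _
  filter_upwards [tendsto_natCast_atTop_atTop.eventually Hx, eventually_ge_atTop 2] with n hn hn2
  have hn0 : (0:ℝ) < n := by
    have : (2:ℝ) ≤ n := by exact_mod_cast hn2
    linarith
  have hlognn : 0 ≤ Real.log n := Real.log_nonneg (by exact_mod_cast Nat.one_le_of_lt hn2)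
  set t : ℝ := Real.exp (-(β * Real.log n)) with ht_def
  have ht0 : 0 < t := Real.exp_pos _
  have ht1 : t ≤ 1 := Real.exp_le_one_iff.mpr (by nlinarith)
  have hC0 : 0 ≤ 1 - (1/(M:ℝ)) * t := by
    have h2 : (1:ℝ)/M ≤ 1/2 := by
      apply div_le_div_of_nonneg_left (by norm_num) (by norm_num) hM2
    nlinarith
  have hCe : 1 - (1/(M:ℝ)) * t ≤ Real.exp (-((1/(M:ℝ)) * t)) := by
    have h := Real.add_one_le_exp (-((1/(M:ℝ)) * t))
    linarith
  set k : ℕ := n / 2 with hk_def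
  calc (1 - (1/(M:ℝ)) * t)^k ≤ (Real.exp (-((1/(M:ℝ)) * t)))^k := pow_le_pow_left₀ hC0 hCe k
    _ = Real.exp ((k:ℝ) * (-((1/(M:ℝ)) * t))) := (Real.exp_nat_mul _ k).symm
    _ ≤ Real.exp (-B * Real.log n) := by
        apply Real.exp_le_exp.mpr
        have hk4 : (n:ℝ) ≤ 4 * (k:ℝ) := by
          have : n ≤ 4 * (n/2) := by omega
          exact_mod_cast this
        have hnt : (n:ℝ) * t = Real.exp (Real.log n * (1 - β)) := by
          rw [ht_def, ← Real.exp_log hn0, ← Real.exp_add]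
          congr 1
          rw [Real.log_exp]
          ring
        have h5 : D * Real.log n ≤ (n:ℝ) * t := by rw [hnt]; exact hn
        have h6 : (n:ℝ) * t ≤ 4 * ((k:ℝ) * t) := by nlinarith
        have h7 : (M:ℝ) * (B * Real.log n) ≤ (k:ℝ) * t := by
          rw [hD_def] at h5
          nlinarith
        have hG : B * Real.log n ≤ (k:ℝ)*t/(M:ℝ) :=
          (le_div_iff₀ hMpos).mpr (by nlinarith [h7])
        have hGoal : (k:ℝ) * (-((1/(M:ℝ)) * t)) = -((k:ℝ)*t/(M:ℝ)) := by ring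
        rw [hGoal]
        linarith

set_option maxHeartbeats 1000000 in
private lemma lem_weib (ζ B : ℝ) (hζ0 : 0 < ζ) (hζ1 : ζ < 1) (hB : 0 < B) :
    ∀ᶠ n : ℕ in atTop, 2 * ζ ^ Real.sqrt ((n:ℝ)/2) ≤ Real.exp (-B * Real.log n) := by
  set s : ℝ := -Real.log ζ with hs_def
  have hs : 0 < s := by
    have := Real.log_neg hζ0 hζ1
    rw [hs_def]; linarith
  have hO := (isLittleO_log_rpow_atTop (show (0:ℝ) < 1/2 by norm_num)).def
    (show (0:ℝ) < (s/2)/(B + 1) by positivity)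
  have Hx : ∀ᶠ x : ℝ in atTop,
      Real.log 2 + B * Real.log x ≤ (s/2) * Real.sqrt x := by
    filter_upwards [hO, eventually_ge_atTop (2:ℝ)] with x hx hx2
    have hx0 : (0:ℝ) < x := by linarith
    have hx1 : (1:ℝ) ≤ x := by linarith
    have hlognn : 0 ≤ Real.log x := Real.log_nonneg hx1
    rw [Real.norm_eq_abs, Real.norm_eq_abs, abs_of_nonneg hlognn,
      abs_of_nonneg (Real.rpow_nonneg hx0.le _)] at hx
    have hsq : x ^ ((1:ℝ)/2) = Real.sqrt x := (Real.sqrt_eq_rpow x).symm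
    rw [hsq] at hx
    have hlog2 : Real.log 2 ≤ Real.log x := Real.log_le_log (by norm_num) hx2
    have hne : B + 1 ≠ 0 := by positivity
    have h1 : (B + 1) * Real.log x ≤ (s/2) * Real.sqrt x := by
      have h1' := mul_le_mul_of_nonneg_left hx (show (0:ℝ) ≤ B + 1 by linarith)
      calc (B + 1) * Real.log x ≤ (B + 1) * (s/2/(B+1) * Real.sqrt x) := h1'
        _ = (s/2) * Real.sqrt x := by field_simp
    have hexpand : (B + 1) * Real.log x = B * Real.log x + Real.log x := by ring
    rw [hexpand] at h1
    linarith
  filter_upwards [tendsto_natCast_atTop_atTop.eventually Hx, eventually_ge_atTop 2] with n hn hn2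
  have hn0 : (0:ℝ) < n := by
    have : (2:ℝ) ≤ n := by exact_mod_cast hn2
    linarith
  have hsq2 : Real.sqrt ((n:ℝ)/2) ≥ Real.sqrt (n:ℝ) / 2 := by
    rw [Real.sqrt_div hn0.le]
    have h2 : Real.sqrt 2 ≤ 2 := by
      nlinarith [Real.sqrt_nonneg (2:ℝ), Real.sq_sqrt (show (0:ℝ) ≤ 2 by norm_num)]
    exact div_le_div_of_nonneg_left (Real.sqrt_nonneg _) (by positivity) h2
  have hrw : 2 * ζ ^ Real.sqrt ((n:ℝ)/2)
      = Real.exp (Real.log 2 + Real.log ζ * Real.sqrt ((n:ℝ)/2)) := by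
    rw [Real.exp_add, Real.exp_log (by norm_num : (0:ℝ) < 2),
      ← Real.rpow_def_of_pos hζ0]
  rw [hrw]
  apply Real.exp_le_exp.mpr
  have h8 : Real.log ζ * Real.sqrt ((n:ℝ)/2) ≤ -(s/2) * Real.sqrt (n:ℝ) := by
    have h9 : Real.log ζ = -s := by rw [hs_def]; ring
    rw [h9]
    have := mul_le_mul_of_nonneg_left hsq2 hs.le
    nlinarith [Real.sqrt_nonneg ((n:ℝ)/2), Real.sqrt_nonneg (n:ℝ)]
  linarith [hn, h8]

set_option maxHeartbeats 1000000 in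
private lemma lem_bern (M : ℕ) (hM : 2 ≤ M) (n : ℕ) (hn : 1 ≤ n) :
    (1:ℝ)/2 ≤ (1 - (1/(M:ℝ)) * Real.exp (-Real.log n))^(n/2) := by
  have hM2 : (2:ℝ) ≤ (M:ℝ) := by exact_mod_cast hM
  have hMpos : (0:ℝ) < M := by linarith
  have hn0 : (0:ℝ) < n := by exact_mod_cast hn
  set u : ℝ := Real.exp (-Real.log n) with hu_def
  have hu0 : 0 < u := Real.exp_pos _
  have hun : u * n = 1 := by
    rw [hu_def, Real.exp_neg, Real.exp_log hn0]
    field_simp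
  have hn1' : (1:ℝ) ≤ (n:ℝ) := by exact_mod_cast hn
  have hu1 : u ≤ 1 := by
    nlinarith [mul_nonneg hu0.le (show (0:ℝ) ≤ (n:ℝ) - 1 by linarith)]
  set k : ℕ := n / 2 with hk_def
  have hk2 : (k:ℝ) ≤ (n:ℝ)/2 := by
    have := Nat.cast_div_le (m := n) (n := 2) (α := ℝ)
    simpa using this
  have hknn : (0:ℝ) ≤ k := Nat.cast_nonneg k
  have hM' : (1:ℝ)/M ≤ 1/2 := by
    apply div_le_div_of_nonneg_left (by norm_num) (by norm_num) hM2
  have hMinv0 : (0:ℝ) < 1/(M:ℝ) := by positivity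
  have hku1 : (k:ℝ)*u ≤ (n:ℝ)*u/2 := by
    nlinarith [mul_le_mul_of_nonneg_right hk2 hu0.le]
  have hku2 : (k:ℝ)*u ≤ 1/2 := by nlinarith [hku1, hun]
  have hterm : (k:ℝ) * ((1/(M:ℝ)) * u) ≤ 1/4 := by
    nlinarith [hku2, hM', mul_nonneg hknn hu0.le, hMinv0]
  have hberk := one_add_mul_le_pow (show (-2:ℝ) ≤ -((1/(M:ℝ)) * u) by nlinarith) k
  have heq : (1 + -((1/(M:ℝ)) * u)) = 1 - (1/(M:ℝ)) * u := by ring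
  rw [heq] at hberk
  have : (1:ℝ) + (k:ℝ) * -((1/(M:ℝ)) * u) ≥ 1/2 := by nlinarith
  linarith [hberk]

set_option maxHeartbeats 10000000 in
/-- Proposition 2: the dominating random variable `N̂` with
`P[N̂ > n] = min{1, E[(1-(1/M)e^{-L(M-1)ν})^{⌊n/2⌋}] + 2ζ^{√(n/2)}}` has a power law
tail of index `μ/((M-1)ν)`. -/
theorem stmt12 {Ω : Type*} {mΩ : MeasurableSpace Ω} (P : Measure Ω) [IsProbabilityMeasure P]
    (L : Ω → ℝ) (hLm : Measurable L) (hLnn : ∀ ω, 0 ≤ L ω)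
    (μ ν ζ : ℝ) (hμ : 0 < μ) (hν : 0 < ν) (hζ0 : 0 < ζ) (hζ1 : ζ < 1)
    (M : ℕ) (hM : 2 ≤ M)
    (htail : Tendsto (fun x : ℝ => Real.log (P {ω | L ω > x}).toReal / x) atTop (nhds (-μ))) :
    Tendsto (fun n : ℕ =>
        Real.log (min 1
            ((∫ ω, (1 - (1 / (M : ℝ)) * Real.exp (-(L ω * ((M : ℝ) - 1) * ν))) ^ (n / 2) ∂P)
              + 2 * ζ ^ Real.sqrt ((n : ℝ) / 2)))
          / Real.log n) atTop
      (nhds (-(μ / (((M : ℝ) - 1) * ν)))) := by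
  have hM2 : (2:ℝ) ≤ (M:ℝ) := by exact_mod_cast hM
  set c : ℝ := ((M:ℝ) - 1) * ν with hc_def
  have hc : 0 < c := by
    have : (1:ℝ) ≤ (M:ℝ) - 1 := by linarith
    positivity
  set b : Ω → ℝ := fun ω => 1 - (1 / (M : ℝ)) * Real.exp (-(L ω * ((M : ℝ) - 1) * ν)) with hb_def
  have hMpos : (0:ℝ) < M := by linarith
  have hb0 : ∀ ω, 0 ≤ b ω := by
    intro ω
    have h1 : Real.exp (-(L ω * ((M : ℝ) - 1) * ν)) ≤ 1 := by
      apply Real.exp_le_one_iff.mpr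
      have : 0 ≤ L ω * ((M:ℝ) - 1) * ν := by
        have := hLnn ω; have : (1:ℝ) ≤ (M:ℝ) - 1 := by linarith
        positivity
      linarith
    have h2 : (1:ℝ)/M ≤ 1/2 := by
      apply div_le_div_of_nonneg_left (by norm_num) (by norm_num) hM2
    have h3 : (1/(M:ℝ)) * Real.exp (-(L ω * ((M : ℝ) - 1) * ν)) ≤ 1/2 * 1 := by
      apply mul_le_mul h2 h1 (Real.exp_pos _).le (by norm_num)
    simp only [hb_def]; linarith
  have hb1 : ∀ ω, b ω ≤ 1 := by
    intro ω
    have h4 : 0 ≤ (1/(M:ℝ)) * Real.exp (-(L ω * ((M : ℝ) - 1) * ν)) := by positivity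
    simp only [hb_def]; linarith
  have hbmeas : Measurable b := by
    apply Measurable.const_sub
    exact (((hLm.mul_const _).mul_const _).neg.exp.const_mul _)
  have hbint : ∀ k : ℕ, Integrable (fun ω => b ω ^ k) P := by
    intro k
    refine Integrable.mono' (integrable_const 1) ((hbmeas.pow_const k).aestronglyMeasurable) ?_
    filter_upwards with ω
    rw [Real.norm_eq_abs, abs_of_nonneg (pow_nonneg (hb0 ω) k)]
    exact pow_le_one₀ (hb0 ω) (hb1 ω)
  have hSm : ∀ x : ℝ, MeasurableSet {ω | L ω > x} :=
    fun x => measurableSet_lt measurable_const hLm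
  -- upper bound
  have hup : ∀ x : ℝ, 0 ≤ x → ∀ k : ℕ,
      (∫ ω, b ω ^ k ∂P) ≤ (1 - (1/(M:ℝ)) * Real.exp (-(x * ((M:ℝ)-1) * ν)))^k
        + (P {ω | L ω > x}).toReal := by
    intro x hx k
    set C : ℝ := 1 - (1/(M:ℝ)) * Real.exp (-(x * ((M:ℝ)-1) * ν)) with hC_def
    have hC0 : 0 ≤ C := by
      have h1 : Real.exp (-(x * ((M : ℝ) - 1) * ν)) ≤ 1 := by
        apply Real.exp_le_one_iff.mpr
        have : 0 ≤ x * ((M:ℝ) - 1) * ν := by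
          have : (1:ℝ) ≤ (M:ℝ) - 1 := by linarith
          positivity
        linarith
      have h2 : (1:ℝ)/M ≤ 1/2 := by
        apply div_le_div_of_nonneg_left (by norm_num) (by norm_num) hM2
      have h3 : (1/(M:ℝ)) * Real.exp (-(x * ((M : ℝ) - 1) * ν)) ≤ 1/2 * 1 :=
        mul_le_mul h2 h1 (Real.exp_pos _).le (by norm_num)
      simp only [hC_def]; linarith
    have hind : Integrable (Set.indicator {ω | L ω > x} (1 : Ω → ℝ)) P :=
      (integrable_const (1:ℝ)).indicator (hSm x)
    calc (∫ ω, b ω ^ k ∂P)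
        ≤ ∫ ω, (C ^ k + Set.indicator {ω | L ω > x} (1 : Ω → ℝ) ω) ∂P := by
          apply integral_mono (hbint k) ((integrable_const _).add (hind))
          intro ω
          by_cases hω : L ω > x
          · have hi : ω ∈ {ω | L ω > x} := hω
            simp only [Pi.add_apply, Set.indicator_of_mem hi, Pi.one_apply]
            have h5 : b ω ^ k ≤ 1 := pow_le_one₀ (hb0 ω) (hb1 ω)
            have h6 : 0 ≤ C ^ k := pow_nonneg hC0 k
            linarith
          · have hi : ω ∉ {ω | L ω > x} := hω
            simp only [Pi.add_apply, Set.indicator_of_notMem hi]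
            have hLx : L ω ≤ x := not_lt.mp hω
            have hbC : b ω ≤ C := by
              have hexp : Real.exp (-(x * ((M:ℝ)-1) * ν)) ≤ Real.exp (-(L ω * ((M:ℝ)-1) * ν)) := by
                apply Real.exp_le_exp.mpr
                have h1 : (0:ℝ) ≤ ((M:ℝ)-1) * ν := by
                  have : (1:ℝ) ≤ (M:ℝ) - 1 := by linarith
                  positivity
                have := mul_le_mul_of_nonneg_right hLx h1
                nlinarith
              have hm : 0 ≤ (1:ℝ)/(M:ℝ) := by positivity
              have := mul_le_mul_of_nonneg_left hexp hm
              simp only [hb_def, hC_def]; linarith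
            have h7 : b ω ^ k ≤ C ^ k := pow_le_pow_left₀ (hb0 ω) hbC k
            linarith
      _ = C ^ k + (P {ω | L ω > x}).toReal := by
          rw [integral_add (integrable_const _) hind, integral_const,
            integral_indicator_one (hSm x)]
          simp
          rfl
  -- lower bound
  have hlow : ∀ x : ℝ, 0 ≤ x → ∀ k : ℕ,
      (1 - (1/(M:ℝ)) * Real.exp (-(x * ((M:ℝ)-1) * ν)))^k * (P {ω | L ω > x}).toReal
        ≤ (∫ ω, b ω ^ k ∂P) := by
    intro x hx k
    set C : ℝ := 1 - (1/(M:ℝ)) * Real.exp (-(x * ((M:ℝ)-1) * ν)) with hC_def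
    have hC0 : 0 ≤ C := by
      have h1 : Real.exp (-(x * ((M : ℝ) - 1) * ν)) ≤ 1 := by
        apply Real.exp_le_one_iff.mpr
        have : 0 ≤ x * ((M:ℝ) - 1) * ν := by
          have : (1:ℝ) ≤ (M:ℝ) - 1 := by linarith
          positivity
        linarith
      have h2 : (1:ℝ)/M ≤ 1/2 := by
        apply div_le_div_of_nonneg_left (by norm_num) (by norm_num) hM2
      have h3 : (1/(M:ℝ)) * Real.exp (-(x * ((M : ℝ) - 1) * ν)) ≤ 1/2 * 1 :=
        mul_le_mul h2 h1 (Real.exp_pos _).le (by norm_num)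
      simp only [hC_def]; linarith
    calc C ^ k * (P {ω | L ω > x}).toReal
        ≤ ∫ ω in {ω | L ω > x}, b ω ^ k ∂P := by
          apply setIntegral_ge_of_const_le_real (hSm x) (measure_ne_top P _)
          · intro ω hω
            apply pow_le_pow_left₀ hC0
            have hexp : Real.exp (-(L ω * ((M:ℝ)-1) * ν)) ≤ Real.exp (-(x * ((M:ℝ)-1) * ν)) := by
              apply Real.exp_le_exp.mpr
              have h1 : (0:ℝ) ≤ ((M:ℝ)-1) * ν := by
                have : (1:ℝ) ≤ (M:ℝ) - 1 := by linarith
                positivity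
              have hLx : x ≤ L ω := le_of_lt hω
              have := mul_le_mul_of_nonneg_right hLx h1
              nlinarith
            have hm : 0 ≤ (1:ℝ)/(M:ℝ) := by positivity
            have := mul_le_mul_of_nonneg_left hexp hm
            simp only [hb_def, hC_def]; linarith
          · exact (hbint k).integrableOn
      _ ≤ ∫ ω, b ω ^ k ∂P := by
          apply setIntegral_le_integral (hbint k)
          filter_upwards with ω
          exact pow_nonneg (hb0 ω) k
  -- main limit argument
  have harg : ∀ y : ℝ, (y / c) * ((M:ℝ)-1) * ν = y := by
    intro y
    rw [mul_assoc, ← hc_def]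
    exact div_mul_cancel₀ y hc.ne'
  set A : ℝ := μ / c with hA_def
  have hA : 0 < A := div_pos hμ hc
  have main : ∀ δ : ℝ, 0 < δ → δ ≤ A/2 →
      ∀ᶠ n : ℕ in atTop,
        Real.exp (-(A+δ) * Real.log n)
          ≤ (∫ ω, b ω ^ (n/2) ∂P) + 2 * ζ ^ Real.sqrt ((n:ℝ)/2) ∧
        (∫ ω, b ω ^ (n/2) ∂P) + 2 * ζ ^ Real.sqrt ((n:ℝ)/2)
          ≤ Real.exp (-(A-δ) * Real.log n) := by
    intro δ hδ0 hδA
    have hδcμ : δ * c ≤ μ / 2 := by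
      have h1 : δ * c ≤ (A/2) * c := mul_le_mul_of_nonneg_right hδA hc.le
      have h2 : (A/2) * c = μ/2 := by rw [hA_def]; field_simp
      linarith
    set ε₁ : ℝ := δ * c / 4 with hε₁_def
    have hδc0 : 0 < δ * c := mul_pos hδ0 hc
    have hε₁0 : 0 < ε₁ := by rw [hε₁_def]; linarith
    have hε₁μ : ε₁ < μ := by rw [hε₁_def]; linarith
    set β : ℝ := (μ - δ*c/2)/(μ - ε₁) with hβ_def
    have hnum : 0 < μ - δ*c/2 := by linarith
    have hden : 0 < μ - ε₁ := by linarith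
    have hβ0 : 0 < β := div_pos hnum hden
    have hβ1 : β < 1 := by
      rw [hβ_def, div_lt_one hden]
      rw [hε₁_def]; linarith
    have hβμ : β * (μ - ε₁) = μ - δ*c/2 := div_mul_cancel₀ _ hden.ne'
    have htail' := lem_tail (fun x => (P {ω | L ω > x}).toReal)
      (fun x => ENNReal.toReal_nonneg) μ ε₁ hε₁0 hε₁μ htail
    have hlogTop : Tendsto (fun n : ℕ => Real.log n) atTop atTop :=
      Real.tendsto_log_atTop.comp tendsto_natCast_atTop_atTop
    have hxl : Tendsto (fun n : ℕ => Real.log n / c) atTop atTop :=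
      hlogTop.atTop_div_const hc
    have hxu : Tendsto (fun n : ℕ => β * Real.log n / c) atTop atTop :=
      (hlogTop.const_mul_atTop hβ0).atTop_div_const hc
    have hcoef_u : ∀ y : ℝ, (-μ+ε₁) * (β * y / c) = -(A - δ/2) * y := by
      intro y
      have h' : (-μ + ε₁) * β = -(μ - δ*c/2) := by linear_combination -hβμ
      have h2 : (-μ+ε₁) * (β * y / c) = ((-μ+ε₁) * β) * y / c := by ring
      rw [h2, h', hA_def]
      field_simp
    have hcoef_l : ∀ y : ℝ, (-μ-ε₁) * (y / c) = -(A + δ/4) * y := by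
      intro y
      rw [hA_def, hε₁_def]
      field_simp
      ring
    have Etail_u : ∀ᶠ n : ℕ in atTop,
        (P {ω | L ω > β * Real.log n / c}).toReal ≤ Real.exp (-(A - δ/2) * Real.log n) := by
      filter_upwards [hxu.eventually htail'] with n hn
      calc (P {ω | L ω > β * Real.log n / c}).toReal
          ≤ Real.exp ((-μ+ε₁) * (β * Real.log n / c)) := hn.2
        _ = Real.exp (-(A - δ/2) * Real.log n) := by rw [hcoef_u]
    have Etail_l : ∀ᶠ n : ℕ in atTop,
        Real.exp (-(A + δ/4) * Real.log n) ≤ (P {ω | L ω > Real.log n / c}).toReal := by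
      filter_upwards [hxl.eventually htail'] with n hn
      calc Real.exp (-(A + δ/4) * Real.log n) = Real.exp ((-μ-ε₁) * (Real.log n / c)) := by
            rw [hcoef_l]
        _ ≤ (P {ω | L ω > Real.log n / c}).toReal := hn.1
    have hA0 : 0 < A - δ/2 := by linarith
    have Egeom : ∀ᶠ n : ℕ in atTop,
        (1 - (1/(M:ℝ)) * Real.exp (-((β * Real.log n / c) * ((M:ℝ)-1) * ν)))^(n/2)
          ≤ Real.exp (-(A - δ/2) * Real.log n) := by
      filter_upwards [lem_geom M hM (A - δ/2) β hA0 hβ0 hβ1] with n h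
      rw [harg (β * Real.log n)]
      exact h
    have Eweib := lem_weib ζ (A - δ/2) hζ0 hζ1 hA0
    have h3exp : ∀ᶠ n : ℕ in atTop, (3:ℝ) ≤ Real.exp ((δ/2) * Real.log n) := by
      filter_upwards [hlogTop.eventually_ge_atTop (2 * Real.log 3 / δ)] with n hn
      have h9 : Real.log 3 ≤ (δ/2) * Real.log n := by
        rw [div_le_iff₀ hδ0] at hn
        nlinarith
      calc (3:ℝ) = Real.exp (Real.log 3) := (Real.exp_log (by norm_num)).symm
        _ ≤ Real.exp ((δ/2) * Real.log n) := Real.exp_le_exp.mpr h9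
    have h2exp : ∀ᶠ n : ℕ in atTop, (2:ℝ) ≤ Real.exp ((3*δ/4) * Real.log n) := by
      filter_upwards [hlogTop.eventually_ge_atTop (2 * Real.log 2 / δ)] with n hn
      have h9 : Real.log 2 ≤ (3*δ/4) * Real.log n := by
        rw [div_le_iff₀ hδ0] at hn
        nlinarith [Real.log_nonneg (show (1:ℝ) ≤ 2 by norm_num)]
      calc (2:ℝ) = Real.exp (Real.log 2) := (Real.exp_log (by norm_num)).symm
        _ ≤ Real.exp ((3*δ/4) * Real.log n) := Real.exp_le_exp.mpr h9
    have Eupper : ∀ᶠ n : ℕ in atTop,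
        (∫ ω, b ω ^ (n/2) ∂P) + 2 * ζ ^ Real.sqrt ((n:ℝ)/2)
          ≤ Real.exp (-(A - δ) * Real.log n) := by
      filter_upwards [Etail_u, Egeom, Eweib, h3exp, eventually_ge_atTop 1] with n h1 h2 h3 h4 hn1
      have hlognn : 0 ≤ Real.log n := Real.log_nonneg (by exact_mod_cast hn1)
      have hxnn : 0 ≤ β * Real.log n / c := by positivity
      have h5 := hup (β * Real.log n / c) hxnn (n/2)
      have h6 : (∫ ω, b ω ^ (n/2) ∂P) + 2 * ζ ^ Real.sqrt ((n:ℝ)/2)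
          ≤ 3 * Real.exp (-(A - δ/2) * Real.log n) := by linarith
      have h7 : 3 * Real.exp (-(A - δ/2) * Real.log n) ≤ Real.exp (-(A - δ) * Real.log n) := by
        have h8 : Real.exp (-(A - δ) * Real.log n)
            = Real.exp ((δ/2) * Real.log n) * Real.exp (-(A - δ/2) * Real.log n) := by
          rw [← Real.exp_add]
          congr 1
          ring
        rw [h8]
        have := Real.exp_pos (-(A - δ/2) * Real.log n)
        nlinarith
      linarith
    have Elower : ∀ᶠ n : ℕ in atTop,
        Real.exp (-(A + δ) * Real.log n)
          ≤ (∫ ω, b ω ^ (n/2) ∂P) + 2 * ζ ^ Real.sqrt ((n:ℝ)/2) := by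
      filter_upwards [Etail_l, h2exp, eventually_ge_atTop 1] with n h1 h2 hn1
      have hn0 : (0:ℝ) < n := by
        have : (1:ℝ) ≤ n := by exact_mod_cast hn1
        linarith
      have hlognn : 0 ≤ Real.log n := Real.log_nonneg (by exact_mod_cast hn1)
      have hxnn : 0 ≤ Real.log n / c := by positivity
      have h5 := hlow (Real.log n / c) hxnn (n/2)
      rw [harg (Real.log n)] at h5
      have hbern := lem_bern M hM n hn1
      have hq : Real.exp (-(A + δ/4) * Real.log n)
          ≤ (P {ω | L ω > Real.log n / c}).toReal := h1
      have hCnn : (0:ℝ) ≤ (1 - (1/(M:ℝ)) * Real.exp (-Real.log n))^(n/2) :=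
        le_trans (by norm_num) hbern
      have h6 : (1/2) * Real.exp (-(A + δ/4) * Real.log n)
          ≤ (1 - (1/(M:ℝ)) * Real.exp (-Real.log n))^(n/2)
            * (P {ω | L ω > Real.log n / c}).toReal :=
        mul_le_mul hbern hq (Real.exp_pos _).le hCnn
      have h7 : Real.exp (-(A + δ) * Real.log n)
          ≤ (1/2) * Real.exp (-(A + δ/4) * Real.log n) := by
        have h8 : Real.exp (-(A + δ/4) * Real.log n)
            = Real.exp ((3*δ/4) * Real.log n) * Real.exp (-(A + δ) * Real.log n) := by
          rw [← Real.exp_add]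
          congr 1
          ring
        rw [h8]
        have := Real.exp_pos (-(A + δ) * Real.log n)
        nlinarith
      have hw : 0 ≤ 2 * ζ ^ Real.sqrt ((n:ℝ)/2) := by positivity
      linarith
    filter_upwards [Eupper, Elower] with n h1 h2
    exact ⟨h2, h1⟩
  exact lem_sandwich
    (fun n : ℕ => (∫ ω, b ω ^ (n/2) ∂P) + 2 * ζ ^ Real.sqrt ((n:ℝ)/2)) A hA main
end

section
/- Let L be a nonnegative random variable with an asymptotically exponential tail with decay rate μ > 0, let M ≥ 2 be an integer and ν > 0. Then lim_{n→∞} (log E[(1 − (M−1)/(Mn) − (1/M) e^{−L(M−1)ν})^n]) / (log n) = −μ / ((M−1)ν). -/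
open MeasureTheory Filter

private lemma stmt13_exp_aux {x : ℝ} (hx0 : 0 ≤ x) (hx : x ≤ 1/2) :
    Real.exp (-(2*x)) ≤ 1 - x := by
  have h1 : 1 + 2*x ≤ Real.exp (2*x) := by linarith [Real.add_one_le_exp (2*x)]
  have h2 : Real.exp (-(2*x)) * Real.exp (2*x) = 1 := by rw [← Real.exp_add]; simp
  nlinarith [Real.exp_pos (2*x), Real.exp_pos (-(2*x)),
    mul_le_mul_of_nonneg_left h1 (by linarith : (0:ℝ) ≤ 1 - x)]

set_option maxHeartbeats 1000000 in
/-- Analytic core of the lower bound in Theorem 3 (steady state behavior):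
`E[(1 - (M-1)/(Mn) - (1/M)e^{-L(M-1)ν})^n]` decays as a power law of index `μ/((M-1)ν)`. -/
theorem stmt13 {Ω : Type*} {mΩ : MeasurableSpace Ω} (P : Measure Ω) [IsProbabilityMeasure P]
    (L : Ω → ℝ) (hLm : Measurable L) (hLnn : ∀ ω, 0 ≤ L ω)
    (μ ν : ℝ) (hμ : 0 < μ) (hν : 0 < ν)
    (M : ℕ) (hM : 2 ≤ M)
    (htail : Tendsto (fun x : ℝ => Real.log (P {ω | L ω > x}).toReal / x) atTop (nhds (-μ))) :
    Tendsto (fun n : ℕ =>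
        Real.log (∫ ω,
            (1 - ((M : ℝ) - 1) / ((M : ℝ) * n)
              - (1 / (M : ℝ)) * Real.exp (-(L ω * ((M : ℝ) - 1) * ν))) ^ n ∂P)
          / Real.log n) atTop
      (nhds (-(μ / (((M : ℝ) - 1) * ν)))) := by
  have hM2 : (2:ℝ) ≤ (M:ℝ) := by exact_mod_cast hM
  have hM1 : (1:ℝ) ≤ (M:ℝ) - 1 := by linarith
  have hMpos : (0:ℝ) < M := by linarith
  set c : ℝ := ((M:ℝ) - 1) * ν with hc_def
  have hc : 0 < c := mul_pos (by linarith) hν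
  have hms : ∀ x : ℝ, MeasurableSet {ω | L ω > x} := fun x =>
    measurableSet_lt measurable_const hLm
  rw [Metric.tendsto_nhds]
  intro δ hδ
  -- choose parameters
  set ε : ℝ := min (c*δ/8) (μ/2) with hε_def
  have hε : 0 < ε := lt_min (by positivity) (by positivity)
  have hεδ : ε ≤ c*δ/8 := min_le_left _ _
  have hεμ : ε ≤ μ/2 := min_le_right _ _
  set θ : ℝ := min (c*δ/(8*μ)) (1/2) with hθ_def
  have hθ : 0 < θ := lt_min (by positivity) (by norm_num)
  have hθμ : θ*μ ≤ c*δ/8 := by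
    calc θ*μ ≤ (c*δ/(8*μ))*μ := mul_le_mul_of_nonneg_right (min_le_left _ _) hμ.le
    _ = c*δ/8 := by field_simp
  have hθhalf : θ ≤ 1/2 := min_le_right _ _
  set s' : ℝ := 1 - θ with hs'_def
  have hs'pos : 0 < s' := by rw [hs'_def]; linarith
  have hs'le : s' ≤ 1 := by rw [hs'_def]; linarith
  set K : ℝ := s' * (μ - ε) / c with hK_def
  have hKpos : 0 < K := div_pos (mul_pos hs'pos (by linarith)) hc
  -- tail bounds
  have htail2 := Metric.tendsto_nhds.1 htail ε hε
  obtain ⟨X0, hX0⟩ := eventually_atTop.1 htail2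
  set X : ℝ := max X0 1 with hX_def
  have hX1 : (1:ℝ) ≤ X := le_max_right _ _
  have htail' : ∀ x, X ≤ x → 0 < (P {ω | L ω > x}).toReal ∧
      (P {ω | L ω > x}).toReal ≤ Real.exp ((-μ+ε)*x) ∧
      Real.exp (-(μ+ε)*x) ≤ (P {ω | L ω > x}).toReal := by
    intro x hx
    have hx1 : (1:ℝ) ≤ x := le_trans hX1 hx
    have hxpos : (0:ℝ) < x := by linarith
    have hd := hX0 x (le_trans (le_max_left _ _) hx)
    rw [Real.dist_eq] at hd
    have habs := abs_lt.1 hd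
    have hub : Real.log (P {ω | L ω > x}).toReal / x < -μ + ε := by
      have := habs.2; linarith
    have hlb : -μ - ε < Real.log (P {ω | L ω > x}).toReal / x := by
      have := habs.1; linarith
    have hlogneg : Real.log (P {ω | L ω > x}).toReal < 0 := by
      by_contra h
      push_neg at h
      have h0 : 0 ≤ Real.log (P {ω | L ω > x}).toReal / x := div_nonneg h hxpos.le
      linarith
    have hppos : 0 < (P {ω | L ω > x}).toReal := by
      rcases eq_or_lt_of_le (ENNReal.toReal_nonneg :
          (0:ℝ) ≤ (P {ω | L ω > x}).toReal) with h | h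
      · rw [← h, Real.log_zero] at hlogneg; linarith
      · exact h
    refine ⟨hppos, ?_, ?_⟩
    · have hlog : Real.log (P {ω | L ω > x}).toReal ≤ (-μ+ε)*x := by
        rw [div_lt_iff₀ hxpos] at hub; linarith
      calc (P {ω | L ω > x}).toReal = Real.exp (Real.log (P {ω | L ω > x}).toReal) :=
            (Real.exp_log hppos).symm
        _ ≤ _ := Real.exp_le_exp.2 hlog
    · have hlog : -(μ+ε)*x ≤ Real.log (P {ω | L ω > x}).toReal := by
        rw [lt_div_iff₀ hxpos] at hlb; nlinarith
      calc Real.exp (-(μ+ε)*x) ≤ Real.exp (Real.log (P {ω | L ω > x}).toReal) :=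
            Real.exp_le_exp.2 hlog
        _ = _ := Real.exp_log hppos
  -- eventual facts about n
  have hlogn : Tendsto (fun n : ℕ => Real.log n) atTop atTop :=
    Real.tendsto_log_atTop.comp tendsto_natCast_atTop_atTop
  have ev1 : ∀ᶠ n : ℕ in atTop, 3 ≤ n := eventually_ge_atTop 3
  have ev2 : ∀ᶠ n : ℕ in atTop, 1 ≤ Real.log n := hlogn.eventually_ge_atTop 1
  have ev3 : ∀ᶠ n : ℕ in atTop, c*X/s' ≤ Real.log n := hlogn.eventually_ge_atTop _
  have ev4 : ∀ᶠ n : ℕ in atTop, Real.log 2 ≤ δ/4 * Real.log n :=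
    (hlogn.const_mul_atTop (by positivity : (0:ℝ) < δ/4)).eventually_ge_atTop _
  have ev5 : ∀ᶠ n : ℕ in atTop, (2:ℝ) ≤ δ/4 * Real.log n :=
    (hlogn.const_mul_atTop (by positivity : (0:ℝ) < δ/4)).eventually_ge_atTop _
  have ev6 : ∀ᶠ n : ℕ in atTop,
      (M:ℝ)*K/θ ≤ Real.exp (θ * Real.log n) / (θ * Real.log n)^1 :=
    (hlogn.const_mul_atTop hθ).eventually
      ((Real.tendsto_exp_div_pow_atTop 1).eventually_ge_atTop _)
  filter_upwards [ev1, ev2, ev3, ev4, ev5, ev6] with n hn3 hln1 hlnX hlog2 h2le hC3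
  have hlnpos : (0:ℝ) < Real.log n := by linarith
  have hn1 : (1:ℝ) ≤ (n:ℝ) := by exact_mod_cast (by omega : 1 ≤ n)
  have hnpos : (0:ℝ) < n := by linarith
  have hnne : n ≠ 0 := by omega
  set t : ℝ := Real.log n / c with ht_def
  set t' : ℝ := s' * Real.log n / c with ht'_def
  have hcXs' : c*X ≤ s' * Real.log n := by
    rw [div_le_iff₀ hs'pos] at hlnX
    linarith [mul_comm (Real.log (n:ℝ)) s']
  have ht'X : X ≤ t' := by
    rw [ht'_def, le_div_iff₀ hc]
    linarith [mul_comm X c]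
  have htX : X ≤ t := by
    rw [ht_def, le_div_iff₀ hc]
    have hs'ln : s' * Real.log n ≤ Real.log n := mul_le_of_le_one_left hlnpos.le hs'le
    linarith [mul_comm X c]
  -- the integrand
  set f : Ω → ℝ := fun ω => (1 - ((M : ℝ) - 1) / ((M : ℝ) * n)
      - (1 / (M : ℝ)) * Real.exp (-(L ω * ((M : ℝ) - 1) * ν))) ^ n with hf_def
  have hexp_le_one : ∀ ω, Real.exp (-(L ω * ((M:ℝ)-1) * ν)) ≤ 1 := by
    intro ω
    rw [Real.exp_le_one_iff]
    have := mul_nonneg (mul_nonneg (hLnn ω) (by linarith : (0:ℝ) ≤ (M:ℝ)-1)) hν.le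
    linarith
  have hbase0 : ∀ ω, 0 ≤ 1 - ((M : ℝ) - 1) / ((M : ℝ) * n)
      - (1 / (M : ℝ)) * Real.exp (-(L ω * ((M : ℝ) - 1) * ν)) := by
    intro ω
    have e1 : ((M:ℝ)-1)/((M:ℝ)*n) ≤ ((M:ℝ)-1)/(M:ℝ) := by
      apply div_le_div_of_nonneg_left (by linarith) hMpos
      calc (M:ℝ) = (M:ℝ)*1 := (mul_one _).symm
        _ ≤ (M:ℝ)*n := mul_le_mul_of_nonneg_left hn1 hMpos.le
    have e2 : (1/(M:ℝ)) * Real.exp (-(L ω * ((M:ℝ)-1) * ν)) ≤ 1/(M:ℝ) := by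
      have := mul_le_mul_of_nonneg_left (hexp_le_one ω) (by positivity : (0:ℝ) ≤ 1/(M:ℝ))
      linarith
    have e3 : ((M:ℝ)-1)/(M:ℝ) + 1/(M:ℝ) = 1 := by field_simp; ring
    linarith
  have hbase1 : ∀ ω, 1 - ((M : ℝ) - 1) / ((M : ℝ) * n)
      - (1 / (M : ℝ)) * Real.exp (-(L ω * ((M : ℝ) - 1) * ν)) ≤ 1 := by
    intro ω
    have e2 : 0 ≤ (1/(M:ℝ)) * Real.exp (-(L ω * ((M:ℝ)-1) * ν)) := by positivity
    have e1 : 0 ≤ ((M:ℝ)-1)/((M:ℝ)*n) := by positivity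
    linarith
  have hf0 : ∀ ω, 0 ≤ f ω := fun ω => pow_nonneg (hbase0 ω) n
  have hf1 : ∀ ω, f ω ≤ 1 := fun ω => pow_le_one₀ (hbase0 ω) (hbase1 ω)
  have hfm : Measurable f := by
    apply Measurable.pow_const
    exact (measurable_const.sub measurable_const).sub
      ((((hLm.mul_const _).mul_const _).neg.exp).const_mul _)
  have hfint : Integrable f P := by
    refine Integrable.mono' (integrable_const (1:ℝ)) hfm.aestronglyMeasurable ?_
    filter_upwards with ω
    rw [Real.norm_eq_abs, abs_of_nonneg (hf0 ω)]
    exact hf1 ω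
  -- lower pointwise bound
  have hlow : ∀ ω, Set.indicator {ω | L ω > t} (fun _ => Real.exp (-2)) ω ≤ f ω := by
    intro ω
    by_cases hω : L ω > t
    · rw [Set.indicator_of_mem (show ω ∈ {ω | L ω > t} from hω)]
      have hcL : Real.log n ≤ L ω * ((M:ℝ)-1) * ν := by
        have h1 : Real.log n / c ≤ L ω := hω.le
        rw [div_le_iff₀ hc] at h1
        calc Real.log (n:ℝ) ≤ L ω * c := h1
          _ = L ω * ((M:ℝ)-1) * ν := by rw [hc_def]; ring
      have hexp : Real.exp (-(L ω * ((M:ℝ)-1) * ν)) ≤ 1/(n:ℝ) := by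
        calc Real.exp (-(L ω * ((M:ℝ)-1) * ν)) ≤ Real.exp (-(Real.log n)) :=
              Real.exp_le_exp.2 (by linarith)
          _ = 1/(n:ℝ) := by rw [Real.exp_neg, Real.exp_log hnpos, one_div]
      have hb : 1 - 1/(n:ℝ) ≤ 1 - ((M : ℝ) - 1) / ((M : ℝ) * n)
          - (1 / (M : ℝ)) * Real.exp (-(L ω * ((M : ℝ) - 1) * ν)) := by
        have h3 : (1/(M:ℝ)) * Real.exp (-(L ω * ((M:ℝ)-1) * ν)) ≤ (1/(M:ℝ))*(1/(n:ℝ)) :=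
          mul_le_mul_of_nonneg_left hexp (by positivity)
        have h4 : ((M:ℝ)-1)/((M:ℝ)*n) + (1/(M:ℝ))*(1/(n:ℝ)) = 1/(n:ℝ) := by
          field_simp
          ring
        linarith
      have hhalf : (1:ℝ)/(n:ℝ) ≤ 1/2 := by
        rw [div_le_div_iff₀ hnpos (by norm_num)]
        have : (3:ℝ) ≤ (n:ℝ) := by exact_mod_cast hn3
        linarith
      have hkey : Real.exp (-(2/(n:ℝ))) ≤ 1 - 1/(n:ℝ) := by
        have := stmt13_exp_aux (x := 1/(n:ℝ)) (by positivity) hhalf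
        have he : -(2*(1/(n:ℝ))) = -(2/(n:ℝ)) := by ring
        rwa [he] at this
      calc Real.exp (-2) = Real.exp (-(2/(n:ℝ))) ^ n := by
            rw [← Real.exp_nat_mul]
            congr 1
            field_simp
        _ ≤ (1 - 1/(n:ℝ)) ^ n := pow_le_pow_left₀ (Real.exp_nonneg _) hkey n
        _ ≤ f ω := pow_le_pow_left₀ (by linarith [hhalf] : (0:ℝ) ≤ 1 - 1/(n:ℝ)) hb n
    · rw [Set.indicator_of_notMem (show ω ∉ {ω | L ω > t} from hω)]
      exact hf0 ω
  have hElow : Real.exp (-2) * (P {ω | L ω > t}).toReal ≤ ∫ ω, f ω ∂P := by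
    have h := integral_mono ((integrable_const (Real.exp (-2))).indicator (hms t)) hfint hlow
    rwa [integral_indicator_const _ (hms t), smul_eq_mul, mul_comm] at h
  have hptpos : 0 < (P {ω | L ω > t}).toReal := (htail' t htX).1
  have hEpos : 0 < ∫ ω, f ω ∂P :=
    lt_of_lt_of_le (by positivity) hElow
  have hEgeq : Real.exp (-2 - (μ+ε)/c * Real.log n) ≤ ∫ ω, f ω ∂P := by
    have h1 : Real.exp (-(μ+ε)*t) ≤ (P {ω | L ω > t}).toReal := (htail' t htX).2.2
    calc Real.exp (-2 - (μ+ε)/c * Real.log n)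
        = Real.exp (-2) * Real.exp (-(μ+ε)*t) := by
          rw [← Real.exp_add]
          congr 1
          rw [ht_def]
          field_simp
          ring
      _ ≤ Real.exp (-2) * (P {ω | L ω > t}).toReal :=
          mul_le_mul_of_nonneg_left h1 (Real.exp_nonneg _)
      _ ≤ _ := hElow
  -- upper pointwise bound
  set B : ℝ := Real.exp (-((n:ℝ) * Real.exp (-(s' * Real.log n)) / (M:ℝ))) with hB_def
  have hupp : ∀ ω, f ω ≤ Set.indicator {ω | L ω > t'} (fun _ => (1:ℝ)) ω + B := by
    intro ω
    by_cases hω : L ω > t'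
    · rw [Set.indicator_of_mem (show ω ∈ {ω | L ω > t'} from hω)]
      have := hf1 ω
      have hBpos : 0 < B := Real.exp_pos _
      linarith
    · rw [Set.indicator_of_notMem (show ω ∉ {ω | L ω > t'} from hω)]
      push_neg at hω
      have hLc : L ω * ((M:ℝ)-1) * ν ≤ s' * Real.log n := by
        rw [ht'_def] at hω
        rw [le_div_iff₀ hc] at hω
        calc L ω * ((M:ℝ)-1) * ν = L ω * c := by rw [hc_def]; ring
          _ ≤ s' * Real.log n := hω
      have hexp : Real.exp (-(s' * Real.log n)) ≤ Real.exp (-(L ω * ((M:ℝ)-1) * ν)) :=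
        Real.exp_le_exp.2 (by linarith)
      have hb : 1 - ((M : ℝ) - 1) / ((M : ℝ) * n)
          - (1 / (M : ℝ)) * Real.exp (-(L ω * ((M : ℝ) - 1) * ν))
          ≤ Real.exp (-((1/(M:ℝ)) * Real.exp (-(s' * Real.log n)))) := by
        have h0 : 0 ≤ ((M:ℝ)-1)/((M:ℝ)*n) := by positivity
        have h1 : (1/(M:ℝ)) * Real.exp (-(s' * Real.log n))
            ≤ (1/(M:ℝ)) * Real.exp (-(L ω * ((M:ℝ)-1) * ν)) :=
          mul_le_mul_of_nonneg_left hexp (by positivity)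
        have h2 := Real.add_one_le_exp (-((1/(M:ℝ)) * Real.exp (-(s' * Real.log n))))
        linarith
      calc f ω ≤ (Real.exp (-((1/(M:ℝ)) * Real.exp (-(s' * Real.log n))))) ^ n :=
            pow_le_pow_left₀ (hbase0 ω) hb n
        _ = B := by
            rw [hB_def, ← Real.exp_nat_mul]
            congr 1
            field_simp
        _ = 0 + B := (zero_add B).symm
  have hEupp : (∫ ω, f ω ∂P) ≤ (P {ω | L ω > t'}).toReal + B := by
    have h := integral_mono hfint
      (((integrable_const (1:ℝ)).indicator (hms t')).add (integrable_const B)) hupp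
    have heq : (∫ ω, (Set.indicator {ω | L ω > t'} (fun _ => (1:ℝ)) ω + B) ∂P)
        = (P {ω | L ω > t'}).toReal + B := by
      rw [integral_add ((integrable_const (1:ℝ)).indicator (hms t')) (integrable_const B),
        integral_indicator_const _ (hms t'), smul_eq_mul, mul_one, integral_const,
        probReal_univ, one_smul]; rfl
    exact le_trans h (le_of_eq heq)
  have ht'eq : (-μ+ε)*t' = -(K * Real.log n) := by
    rw [ht'_def, hK_def]
    field_simp
    ring
  have hBle : B ≤ Real.exp ((-μ+ε)*t') := by
    rw [hB_def]
    apply Real.exp_le_exp.2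
    have hθln : 0 < θ * Real.log n := mul_pos hθ hlnpos
    have h1 : (M:ℝ)*K*Real.log n ≤ Real.exp (θ * Real.log n) := by
      have h := mul_le_mul_of_nonneg_right hC3 hθln.le
      rw [pow_one, div_mul_cancel₀ _ (ne_of_gt hθln)] at h
      calc (M:ℝ)*K*Real.log n = ((M:ℝ)*K/θ)*(θ*Real.log n) := by field_simp
        _ ≤ Real.exp (θ * Real.log n) := h
    have h2 : (n:ℝ) * Real.exp (-(s' * Real.log n)) = Real.exp (θ * Real.log n) := by
      have hn : (n:ℝ) = Real.exp (Real.log n) := (Real.exp_log hnpos).symm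
      nth_rewrite 1 [hn]
      rw [← Real.exp_add]
      congr 1
      rw [hs'_def]
      ring
    have hKln : K * Real.log n ≤ Real.exp (θ * Real.log n) / (M:ℝ) := by
      rw [le_div_iff₀ hMpos]
      calc K * Real.log (n:ℝ) * (M:ℝ) = (M:ℝ)*K*Real.log (n:ℝ) := by ring
        _ ≤ Real.exp (θ * Real.log n) := h1
    rw [ht'eq, h2]
    exact neg_le_neg hKln
  have hEupp2 : (∫ ω, f ω ∂P) ≤ 2 * Real.exp (-(K * Real.log n)) := by
    have hp' : (P {ω | L ω > t'}).toReal ≤ Real.exp ((-μ+ε)*t') := (htail' t' ht'X).2.1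
    rw [← ht'eq]
    linarith
  -- log bounds
  have hlogup : Real.log (∫ ω, f ω ∂P) ≤ Real.log 2 - K * Real.log n := by
    have h := Real.log_le_log hEpos hEupp2
    rwa [Real.log_mul two_ne_zero (Real.exp_ne_zero _), Real.log_exp,
      ← sub_eq_add_neg] at h
  have hloglow : -2 - (μ+ε)/c * Real.log n ≤ Real.log (∫ ω, f ω ∂P) :=
    (Real.le_log_iff_exp_le hEpos).2 hEgeq
  -- conclude
  rw [Real.dist_eq, abs_lt]
  have hup : Real.log (∫ ω, f ω ∂P) / Real.log n ≤ Real.log 2 / Real.log n - K := by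
    have h1 : Real.log (∫ ω, f ω ∂P) / Real.log n
        ≤ (Real.log 2 - K * Real.log n) / Real.log n := (div_le_div_iff_of_pos_right hlnpos).mpr hlogup
    have h2 : (Real.log 2 - K * Real.log n) / Real.log n
        = Real.log 2 / Real.log n - K := by
      field_simp
    linarith
  have hlo : -2 / Real.log n - (μ+ε)/c ≤ Real.log (∫ ω, f ω ∂P) / Real.log n := by
    have h1 : (-2 - (μ+ε)/c * Real.log n) / Real.log n
        ≤ Real.log (∫ ω, f ω ∂P) / Real.log n := (div_le_div_iff_of_pos_right hlnpos).mpr hloglow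
    have h2 : (-2 - (μ+ε)/c * Real.log n) / Real.log n
        = -2 / Real.log n - (μ+ε)/c := by
      field_simp
    linarith
  have hlog2' : Real.log 2 / Real.log n ≤ δ/4 := by
    rw [div_le_iff₀ hlnpos]; linarith
  have h2le' : -2 / Real.log n ≥ -(δ/4) := by
    rw [ge_iff_le, neg_le, neg_div, neg_neg, div_le_iff₀ hlnpos]; linarith
  have hKμ : μ/c - K ≤ δ/4 := by
    have h1 : μ - s'*(μ-ε) ≤ c*δ/4 := by
      have e : μ - s'*(μ-ε) = ε + θ*μ - θ*ε := by rw [hs'_def]; ring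
      linarith [e, mul_nonneg hθ.le hε.le, hθμ, hεδ]
    have h2 : μ/c - K = (μ - s'*(μ-ε))/c := by
      rw [hK_def]; field_simp
    rw [h2, div_le_iff₀ hc]
    linarith [(by ring : δ/4*c = c*δ/4)]
  have hεc : ε/c ≤ δ/8 := by
    rw [div_le_iff₀ hc]
    linarith [(by ring : δ/8*c = c*δ/8)]
  constructor
  · linarith [hlo, h2le', hεc, add_div μ ε c, hδ]
  · linarith [hup, hlog2', hKμ, hδ]
end
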